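/- For every ε > 0, if Y_ε is the C² solution of Y_ε' = F(Y_ε) with Y_ε(a) = Y(a) − ε, where F is nondecreasing and C¹, and V is nondecreasing with V' ≥ F(V) almost everywhere and Y(a) ≤ V(a), then Y_ε(t) < V(t) for all t ∈ [a,b]. -/

import Mathlib

open MeasureTheory Set

open MeasureTheory Set Filter Topology

lemma monotone_integral_le (V g : ℝ → ℝ) (a c : ℝ) (hac : a ≤ c)
    (hVmono : MonotoneOn V (Icc a c))
    (hg : ContinuousOn g (Icc a c))
    (hV' : ∀ᵐ t ∂(volume.restrict (Ioo a c)), ∃ v : ℝ, HasDerivAt V v t ∧ g t ≤ v) :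
    ∫ t in a..c, g t ≤ V c - V a := by
  -- clamped extension
  set W : ℝ → ℝ := fun t => V (max a (min t c)) with hW
  have hclamp : ∀ t, max a (min t c) ∈ Icc a c :=
    fun t => ⟨le_max_left _ _, max_le (by linarith) (min_le_right _ _)⟩
  have hWmono : Monotone W := fun s t hst =>
    hVmono (hclamp s) (hclamp t) (max_le_max le_rfl (min_le_min hst le_rfl))
  have hWmeas : Measurable W := hWmono.measurable
  have hWlb : ∀ t, V a ≤ W t := fun t => hVmono ⟨le_rfl, hac⟩ (hclamp t) (hclamp t).1
  have hWub : ∀ t, W t ≤ V c := fun t => hVmono (hclamp t) ⟨hac, le_rfl⟩ (hclamp t).2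
  have hWeq : ∀ t ∈ Icc a c, W t = V t := by
    intro t ht
    simp only [hW, max_eq_right, min_eq_left ht.2, max_eq_right ht.1]
  -- W integrable on any interval
  have hWint : ∀ x y : ℝ, IntervalIntegrable W volume x y := by
    intro x y
    apply IntervalIntegrable.mono_fun' (g := fun _ => max |V a| |V c|)
      (intervalIntegrable_const)
    · exact hWmeas.aestronglyMeasurable
    · filter_upwards with t
      rw [Real.norm_eq_abs, abs_le]
      constructor
      · calc -(max |V a| |V c|) ≤ -|V a| := by simp
          _ ≤ V a := neg_abs_le _
          _ ≤ W t := hWlb t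
      · calc W t ≤ V c := hWub t
          _ ≤ |V c| := le_abs_self _
          _ ≤ max |V a| |V c| := le_max_right _ _
  -- difference quotients
  set φ : ℕ → ℝ → ℝ := fun n t => ((n : ℝ) + 1) * (W (t + 1/((n:ℝ)+1)) - W t) with hφ
  have hφnonneg : ∀ n t, 0 ≤ φ n t := by
    intro n t
    have h1 : (0:ℝ) ≤ (n:ℝ) + 1 := by positivity
    have h2 := hWmono (le_add_of_nonneg_right (by positivity : (0:ℝ) ≤ 1/((n:ℝ)+1)) : t ≤ t + 1/((n:ℝ)+1))
    exact mul_nonneg h1 (by linarith)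
  have hφmeas : ∀ n, Measurable (φ n) :=
    fun n => (measurable_const.mul ((hWmeas.comp (measurable_add_const _)).sub hWmeas))
  -- bound the integral of each φ n
  have hφint : ∀ n, ∫ t in a..c, φ n t ≤ V c - V a := by
    intro n
    set h : ℝ := 1/((n:ℝ)+1) with hh
    have hhpos : 0 < h := by positivity
    have e1 : ∫ t in a..c, W (t + h) = ∫ t in (a+h)..(c+h), W t :=
      intervalIntegral.integral_comp_add_right W h
    have e2 : (∫ t in (a+h)..(c+h), W t) - ∫ t in a..c, W t
        = (∫ t in c..(c+h), W t) - ∫ t in a..(a+h), W t := by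
      have c1 : (∫ t in a..(a+h), W t) + ∫ t in (a+h)..(c+h), W t = ∫ t in a..(c+h), W t :=
        intervalIntegral.integral_add_adjacent_intervals (hWint _ _) (hWint _ _)
      have c2 : (∫ t in a..c, W t) + ∫ t in c..(c+h), W t = ∫ t in a..(c+h), W t :=
        intervalIntegral.integral_add_adjacent_intervals (hWint _ _) (hWint _ _)
      linarith
    have b1 : ∫ t in c..(c+h), W t ≤ h * V c := by
      have : ∫ t in c..(c+h), W t ≤ ∫ t in c..(c+h), V c := by
        apply intervalIntegral.integral_mono_on (by linarith) (hWint _ _) intervalIntegrable_const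
        intro t _; exact hWub t
      simpa using this.trans_eq (by simp [mul_comm])
    have b2 : h * V a ≤ ∫ t in a..(a+h), W t := by
      have : ∫ t in a..(a+h), (V a) ≤ ∫ t in a..(a+h), W t := by
        apply intervalIntegral.integral_mono_on (by linarith) intervalIntegrable_const (hWint _ _)
        intro t _; exact hWlb t
      calc h * V a = ∫ t in a..(a+h), (V a) := by simp [mul_comm]
        _ ≤ _ := this
    have e3 : ∫ t in a..c, φ n t
        = ((n:ℝ)+1) * ((∫ t in a..c, W (t+h)) - ∫ t in a..c, W t) := by
      have hint : IntervalIntegrable (fun t => W (t + h)) volume a c := by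
        simpa using (hWint (a+h) (c+h)).comp_add_right h
      rw [← intervalIntegral.integral_sub hint (hWint a c),
        ← intervalIntegral.integral_const_mul]
    have hmul : ((n:ℝ)+1) * h = 1 := by
      rw [hh, mul_one_div, div_self (by positivity)]
    calc ∫ t in a..c, φ n t = ((n:ℝ)+1) * ((∫ t in a..c, W (t+h)) - ∫ t in a..c, W t) := e3
      _ = ((n:ℝ)+1) * ((∫ t in c..(c+h), W t) - ∫ t in a..(a+h), W t) := by rw [e1, e2]
      _ ≤ ((n:ℝ)+1) * (h * V c - h * V a) := by
          apply mul_le_mul_of_nonneg_left (by linarith) (by positivity)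
      _ = V c - V a := by rw [mul_sub, ← mul_assoc, ← mul_assoc, hmul]; ring
  -- a.e. pointwise liminf bound on `Ioo a c`
  have hofmax : ∀ x : ℝ, ENNReal.ofReal (max x 0) = ENNReal.ofReal x := by
    intro x
    rcases le_total x 0 with hx | hx
    · rw [max_eq_right hx, ENNReal.ofReal_of_nonpos hx, ENNReal.ofReal_zero]
    · rw [max_eq_left hx]
  have hae : ∀ᵐ t ∂(volume.restrict (Ioo a c)),
      ENNReal.ofReal (g t) ≤ Filter.atTop.liminf (fun n => ENNReal.ofReal (φ n t)) := by
    filter_upwards [hV', ae_restrict_mem measurableSet_Ioo] with t hvd ht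
    obtain ⟨v, hvd, hgv⟩ := hvd
    have hWV : W =ᶠ[𝓝 t] V := by
      filter_upwards [isOpen_Ioo.mem_nhds ht] with s hs
      exact hWeq s ⟨hs.1.le, hs.2.le⟩
    have hWd : HasDerivAt W v t := hvd.congr_of_eventuallyEq hWV
    have hseq : Tendsto (fun n : ℕ => t + 1/((n:ℝ)+1)) atTop (𝓝[≠] t) := by
      rw [tendsto_nhdsWithin_iff]
      constructor
      · have h0 : Tendsto (fun n : ℕ => 1/((n:ℝ)+1)) atTop (𝓝 0) :=
          tendsto_one_div_add_atTop_nhds_zero_nat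
        simpa using tendsto_const_nhds.add h0
      · filter_upwards with n
        have : (0:ℝ) < 1/((n:ℝ)+1) := by positivity
        simp only [mem_compl_iff, mem_singleton_iff]
        intro hcon
        nlinarith [hcon]
    have hslope := (hasDerivAt_iff_tendsto_slope.mp hWd).comp hseq
    have htend : Tendsto (fun n => φ n t) atTop (𝓝 v) := by
      refine hslope.congr (fun n => ?_)
      have hne : (1:ℝ)/((n:ℝ)+1) ≠ 0 := by positivity
      simp only [Function.comp, slope_def_field, hφ]
      rw [show t + 1/((n:ℝ)+1) - t = 1/((n:ℝ)+1) by ring, div_div_eq_mul_div, div_one, mul_comm]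
    have : Tendsto (fun n => ENNReal.ofReal (φ n t)) atTop (𝓝 (ENNReal.ofReal v)) :=
      ENNReal.tendsto_ofReal htend
    rw [this.liminf_eq]
    exact ENNReal.ofReal_le_ofReal hgv
  -- each φ n is integrable on Ioo a c, with lintegral bounded by `V c - V a`
  have hφlint : ∀ n, ∫⁻ t in Ioo a c, ENNReal.ofReal (φ n t) ≤ ENNReal.ofReal (V c - V a) := by
    intro n
    have hintn : IntegrableOn (φ n) (Ioo a c) := by
      apply Integrable.mono' (g := fun _ => ((n:ℝ)+1) * (V c - V a))
      · exact (integrableOn_const measure_Ioo_lt_top.ne)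
      · exact (hφmeas n).aestronglyMeasurable
      · filter_upwards with t
        rw [Real.norm_eq_abs, abs_of_nonneg (hφnonneg n t)]
        have h1 : W (t + 1/((n:ℝ)+1)) ≤ V c := hWub _
        have h2 : V a ≤ W t := hWlb _
        have h3 : (0:ℝ) ≤ (n:ℝ)+1 := by positivity
        exact mul_le_mul_of_nonneg_left (by linarith) h3
    rw [← MeasureTheory.ofReal_integral_eq_lintegral_ofReal hintn
      (Filter.Eventually.of_forall (fun t => hφnonneg n t))]
    apply ENNReal.ofReal_le_ofReal
    have : ∫ t in Ioo a c, φ n t = ∫ t in a..c, φ n t := by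
      rw [intervalIntegral.integral_of_le hac, MeasureTheory.integral_Ioc_eq_integral_Ioo]
    rw [this]
    exact hφint n
  have hlim : ∫⁻ t in Ioo a c, ENNReal.ofReal (g t) ≤ ENNReal.ofReal (V c - V a) := by
    calc ∫⁻ t in Ioo a c, ENNReal.ofReal (g t)
        ≤ ∫⁻ t in Ioo a c, Filter.atTop.liminf (fun n => ENNReal.ofReal (φ n t)) :=
          lintegral_mono_ae hae
      _ ≤ Filter.atTop.liminf (fun n => ∫⁻ t in Ioo a c, ENNReal.ofReal (φ n t)) :=
          lintegral_liminf_le (fun n => (hφmeas n).ennreal_ofReal)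
      _ ≤ ENNReal.ofReal (V c - V a) :=
          Filter.liminf_le_of_frequently_le
            (Filter.Frequently.of_forall (fun n => hφlint n))
  -- conclude
  have hVca : 0 ≤ V c - V a := sub_nonneg.2 (hVmono ⟨le_rfl, hac⟩ ⟨hac, le_rfl⟩ hac)
  have hgint : IntervalIntegrable g volume a c :=
    (by rw [uIcc_of_le hac]; exact hg : ContinuousOn g (uIcc a c)).intervalIntegrable
  have hgmaxc : ContinuousOn (fun t => max (g t) 0) (Icc a c) := fun x hx => (hg x hx).max continuousWithinAt_const
  have hgmax : IntervalIntegrable (fun t => max (g t) 0) volume a c :=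
    (by rw [uIcc_of_le hac]; exact hgmaxc :
      ContinuousOn (fun t => max (g t) 0) (uIcc a c)).intervalIntegrable
  have step1 : ∫ t in a..c, g t ≤ ∫ t in a..c, max (g t) 0 :=
    intervalIntegral.integral_mono_on hac hgint hgmax (fun t _ => le_max_left _ _)
  have step2 : ∫ t in a..c, max (g t) 0
      = (∫⁻ t in Ioo a c, ENNReal.ofReal (g t)).toReal := by
    rw [intervalIntegral.integral_of_le hac, MeasureTheory.integral_Ioc_eq_integral_Ioo]
    have hrw := MeasureTheory.integral_eq_lintegral_of_nonneg_ae
      (μ := volume.restrict (Ioo a c)) (f := fun t => max (g t) 0)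
      (Filter.Eventually.of_forall (fun t => le_max_right _ _))
      ((hgmaxc.mono Ioo_subset_Icc_self).aestronglyMeasurable measurableSet_Ioo)
    rw [hrw]
    congr 1
    exact lintegral_congr (fun t => hofmax (g t))
  calc ∫ t in a..c, g t ≤ ∫ t in a..c, max (g t) 0 := step1
    _ = (∫⁻ t in Ioo a c, ENNReal.ofReal (g t)).toReal := step2
    _ ≤ V c - V a := ENNReal.toReal_le_of_le_ofReal hVca hlim

/-- Strict comparison with the downward-shifted solution: if `Yε` solves `Yε' = F(Yε)`
with `Yε a = Y a − ε`, where `F` is nondecreasing and `C¹`, `V` is nondecreasing with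
`V' ≥ F(V)` a.e. and `Y a ≤ V a`, then `Yε < V` on `[a,b]`. -/
theorem ode_comparison_strict (a b : ℝ) (hab : a ≤ b) (V F Y : ℝ → ℝ)
    (hVmono : MonotoneOn V (Icc a b))
    (hV' : ∀ᵐ t ∂(volume.restrict (Icc a b)), ∃ v : ℝ, HasDerivAt V v t ∧ F (V t) ≤ v)
    (hFmono : Monotone F) (hF : ContDiff ℝ 1 F)
    (hY : ContDiffOn ℝ 2 Y (Icc a b))
    (hYode : ∀ t ∈ Icc a b, HasDerivAt Y (F (Y t)) t)
    (hYa : Y a ≤ V a)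
    (ε : ℝ) (hε : 0 < ε) (Yε : ℝ → ℝ)
    (hYε : ContDiffOn ℝ 2 Yε (Icc a b))
    (hYεode : ∀ t ∈ Icc a b, HasDerivAt Yε (F (Yε t)) t)
    (hYεa : Yε a = Y a - ε) :
    ∀ t ∈ Icc a b, Yε t < V t := by
  by_contra hcon
  push_neg at hcon
  obtain ⟨t0, ht0, ht0V⟩ := hcon
  set A : Set ℝ := {t | t ∈ Icc a b ∧ V t ≤ Yε t} with hA
  have hAne : A.Nonempty := ⟨t0, ht0, ht0V⟩
  have hAbdd : BddBelow A := ⟨a, fun t ht => ht.1.1⟩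
  set c := sInf A with hc
  have hca : a ≤ c := le_csInf hAne (fun t ht => ht.1.1)
  have hcb : c ≤ b := (csInf_le hAbdd ⟨ht0, ht0V⟩).trans ht0.2
  have hcmem : c ∈ Icc a b := ⟨hca, hcb⟩
  -- V c ≤ Yε c (the infimum is attained as a contact point)
  have hVYc : V c ≤ Yε c := by
    by_contra hlt
    push_neg at hlt
    have hcont : ContinuousAt Yε c := (hYεode c hcmem).continuousAt
    obtain ⟨δ, hδpos, hδ⟩ := Metric.continuousAt_iff.mp hcont (V c - Yε c) (by linarith)
    have hlb : c + δ ≤ sInf A := by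
      apply le_csInf hAne
      intro t ht
      by_contra htc
      push_neg at htc
      have htc' : c ≤ t := csInf_le hAbdd ht
      have hdist : dist t c < δ := by
        rw [Real.dist_eq, abs_of_nonneg (by linarith)]
        linarith
      have hYεt : Yε t < V c := by
        have := hδ hdist
        rw [Real.dist_eq, abs_lt] at this
        linarith
      have hVt : V c ≤ V t := hVmono hcmem ht.1 htc'
      have := ht.2
      linarith
    have : 0 < δ := hδpos
    rw [← hc] at hlb
    linarith
  -- FTC for Yε on [a, c]
  have hsub : Icc a c ⊆ Icc a b := Icc_subset_Icc_right hcb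
  have hcontYε : ∀ t ∈ Icc a c, ContinuousAt Yε t :=
    fun t ht => (hYεode t (hsub ht)).continuousAt
  have hgcont : ContinuousOn (fun t => F (Yε t)) (Icc a c) := fun t ht =>
    (hF.continuous.continuousAt.comp (hcontYε t ht)).continuousWithinAt
  have hFTC : ∫ t in a..c, F (Yε t) = Yε c - Yε a := by
    apply intervalIntegral.integral_eq_sub_of_hasDerivAt
    · intro t ht
      rw [uIcc_of_le hca] at ht
      exact hYεode t (hsub ht)
    · apply ContinuousOn.intervalIntegrable
      rw [uIcc_of_le hca]
      exact hgcont
  -- apply the key integral inequality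
  have hkey : ∫ t in a..c, F (Yε t) ≤ V c - V a := by
    apply monotone_integral_le V _ a c hca (hVmono.mono hsub) hgcont
    have hres : ∀ᵐ t ∂(volume.restrict (Ioo a c)),
        ∃ v : ℝ, HasDerivAt V v t ∧ F (V t) ≤ v := by
      apply ae_restrict_of_ae_restrict_of_subset (Ioo_subset_Icc_self.trans hsub) hV'
    filter_upwards [hres, ae_restrict_mem measurableSet_Ioo] with t hvd ht
    obtain ⟨v, hvd, hFv⟩ := hvd
    refine ⟨v, hvd, le_trans ?_ hFv⟩
    apply hFmono
    -- Yε t < V t since t < c = sInf A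
    have htA : t ∉ A := fun htA => absurd (csInf_le hAbdd htA) (not_le.mpr ht.2)
    have : ¬ (V t ≤ Yε t) := fun hle => htA ⟨hsub ⟨ht.1.le, ht.2.le⟩, hle⟩
    linarith [not_le.mp this]
  -- contradiction
  rw [hFTC] at hkey
  have hVac : V a ≤ V c := hVmono ⟨le_rfl, hab⟩ hcmem hca
  linarith
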